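/- Let n ≥ 2 and let α₁ > α₂ > … > αₙ be real numbers. Then the integral of the Vandermonde determinant Δ_{n−1}(β) = ∏_{1≤i<j≤n−1}(β_i − β_j) over the interlacing region {β ∈ ℝ^{n−1} : α₁ ≥ β₁ ≥ α₂ ≥ β₂ ≥ … ≥ β_{n−1} ≥ αₙ}, with respect to Lebesgue measure on ℝ^{n−1}, equals Δ_n(α)/(n−1)!. -/

import Mathlib

open MeasureTheory Finset


lemma integral_det_aux {m : ℕ} (f : Fin m → Fin m → ℝ → ℝ) (hf : ∀ i j, Integrable (f i j)) :
    ∫ x : Fin m → ℝ, Matrix.det (Matrix.of fun i j => f i j (x i))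
      = Matrix.det (Matrix.of fun i j => ∫ t, f i j t) := by
  have h1 : ∀ x : Fin m → ℝ, Matrix.det (Matrix.of fun i j => f i j (x i))
      = ∑ σ : Equiv.Perm (Fin m), (Equiv.Perm.sign σ : ℝ) * ∏ k, f k (σ⁻¹ k) (x k) := by
    intro x
    rw [Matrix.det_apply']
    refine Finset.sum_congr rfl fun σ _ => ?_
    congr 1
    rw [← Equiv.prod_comp σ (fun k => f k (σ⁻¹ k) (x k))]
    simp
  simp_rw [h1]
  rw [integral_finset_sum _ (fun σ _ =>
    (Integrable.fintype_prod (f := fun k => f k (σ⁻¹ k)) (fun k => hf k (σ⁻¹ k))).const_mul _)]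
  rw [Matrix.det_apply']
  refine Finset.sum_congr rfl fun σ _ => ?_
  rw [integral_const_mul, volume_pi, MeasureTheory.integral_fintype_prod_eq_prod (ι := Fin m) (fun k => f k (σ⁻¹ k))]
  congr 1
  rw [← Equiv.prod_comp σ (fun k => ∫ t, f k (σ⁻¹ k) t)]
  simp


lemma prod_sub_swap {m : ℕ} (γ : Fin m → ℝ) :
    ∏ i, ∏ j ∈ Ioi i, (γ i - γ j)
      = (-1 : ℝ) ^ (∑ i : Fin m, (Ioi i).card) * ∏ i, ∏ j ∈ Ioi i, (γ j - γ i) := by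
  rw [← Finset.prod_pow_eq_pow_sum, ← Finset.prod_mul_distrib]
  refine Finset.prod_congr rfl fun i _ => ?_
  rw [← Finset.prod_const, ← Finset.prod_mul_distrib]
  exact Finset.prod_congr rfl fun j _ => by ring

lemma K_eq (m : ℕ) : (∑ i : Fin m, (Ioi i).card) = ∑ i ∈ range m, i := by
  simp only [Fin.card_Ioi]
  rw [Fin.sum_univ_eq_sum_range]
  exact Finset.sum_range_reflect id m


lemma det_diff_eq (M : ℕ) (α : Fin (M + 2) → ℝ) :
    Matrix.det (Matrix.of fun (i j : Fin (M + 1)) =>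
        ((α i.castSucc ^ ((j : ℕ) + 1) - α i.succ ^ ((j : ℕ) + 1)) / ((j : ℕ) + 1) : ℝ))
      = (-1 : ℝ) ^ (M + 1) * (∏ i : Fin (M + 2), ∏ j ∈ Ioi i, (α j - α i))
          * ((Nat.factorial (M + 1) : ℝ))⁻¹ := by
  set B : Matrix (Fin (M + 1)) (Fin (M + 1)) ℝ := Matrix.of fun i j =>
    ((α i.castSucc ^ ((j : ℕ) + 1) - α i.succ ^ ((j : ℕ) + 1)) / ((j : ℕ) + 1) : ℝ) with hB
  set C : Matrix (Fin (M + 2)) (Fin (M + 2)) ℝ := Matrix.of fun i j =>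
    if (j : ℕ) = 0 then 1 else α i ^ (j : ℕ) / (j : ℕ) with hC
  -- det C
  have hCval : Matrix.det C = (∏ i : Fin (M + 2), ∏ j ∈ Ioi i, (α j - α i))
      * ((Nat.factorial (M + 1) : ℝ))⁻¹ := by
    have h1 : C = (Matrix.vandermonde α) *
        Matrix.diagonal (fun j : Fin (M + 2) => if (j : ℕ) = 0 then (1 : ℝ) else ((j : ℕ) : ℝ)⁻¹) := by
      ext i j
      rw [Matrix.mul_diagonal]
      by_cases h : j = 0 <;>
        simp [hC, Matrix.vandermonde, h, div_eq_mul_inv]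
    have h2 : (∏ j : Fin (M + 2), if (j : ℕ) = 0 then (1 : ℝ) else ((j : ℕ) : ℝ)⁻¹)
        = ((Nat.factorial (M + 1) : ℝ))⁻¹ := by
      have h3 : ∏ x : Fin (M + 1), (((x : ℕ) + 1 : ℕ) : ℝ) = ((Nat.factorial (M + 1) : ℝ)) := by
        rw [← Nat.cast_prod]
        congr 1
        rw [Fin.prod_univ_eq_prod_range (fun k => k + 1)]
        exact Finset.prod_range_add_one_eq_factorial _
      rw [Fin.prod_univ_succ, ← h3]
      push_cast
      rw [← Finset.prod_inv_distrib]
      norm_num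
    rw [h1, Matrix.det_mul, Matrix.det_diagonal, Matrix.det_vandermonde, h2]
  -- the row-reduced matrix
  set A : Matrix (Fin (M + 2)) (Fin (M + 2)) ℝ := Matrix.of fun i =>
    Fin.cases (motive := fun _ => Fin (M + 2) → ℝ) (fun j => C 0 j)
      (fun i' j => C i'.succ j - C i'.castSucc j) i with hA
  have hCA : Matrix.det C = Matrix.det A := by
    apply Matrix.det_eq_of_forall_row_eq_smul_add_pred (fun _ => (1 : ℝ))
    · intro j; simp [hA]
    · intro i j; simp [hA]
  have hA0 : ∀ j : Fin (M + 2), A 0 j = C 0 j := fun j => by simp [hA]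
  have hAs : ∀ (i : Fin (M + 1)) (j : Fin (M + 2)),
      A i.succ j = C i.succ j - C i.castSucc j := fun i j => by simp [hA]
  have hC0 : ∀ i : Fin (M + 2), C i 0 = 1 := fun i => by simp [hC]
  have hsub : A.submatrix Fin.succ Fin.succ = -B := by
    ext i j
    rw [Matrix.submatrix_apply, hAs]
    simp only [hB, hC, Matrix.of_apply, Fin.val_succ, Nat.succ_ne_zero, Nat.add_eq_zero,
      and_false, if_neg, ite_false, Matrix.neg_apply]
    push_cast
    ring
  have hdetA : Matrix.det A = (-1 : ℝ) ^ (M + 1) * Matrix.det B := by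
    rw [Matrix.det_succ_column_zero]
    rw [Finset.sum_eq_single_of_mem 0 (Finset.mem_univ _)]
    · rw [Fin.succAbove_zero, hsub, Matrix.det_neg]
      simp [hA0, hC0]
    · intro i _ hi
      obtain ⟨i', rfl⟩ := Fin.eq_succ_of_ne_zero hi
      rw [hAs, hC0, hC0]
      ring
  have h1 : ((-1 : ℝ) ^ (M + 1)) * ((-1 : ℝ) ^ (M + 1)) = 1 := by
    rw [← pow_add]
    exact Even.neg_one_pow ⟨M + 1, by ring⟩
  calc Matrix.det B = ((-1 : ℝ) ^ (M + 1) * (-1 : ℝ) ^ (M + 1)) * Matrix.det B := by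
        rw [h1, one_mul]
    _ = (-1 : ℝ) ^ (M + 1) * Matrix.det A := by rw [mul_assoc, ← hdetA]
    _ = _ := by rw [← hCA, hCval]; ring

theorem stmt_1 (M : ℕ) (α : Fin (M + 2) → ℝ) (hα : StrictAnti α) :
    ∫ β in {β : Fin (M + 1) → ℝ |
        ∀ i : Fin (M + 1), β i ≤ α i.castSucc ∧ α i.succ ≤ β i},
        ∏ i : Fin (M + 1), ∏ j ∈ Finset.Ioi i, (β i - β j)
      = (∏ i : Fin (M + 2), ∏ j ∈ Finset.Ioi i, (α i - α j)) / (Nat.factorial (M + 1) : ℝ) := by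
  have hle : ∀ i : Fin (M + 1), α i.succ ≤ α i.castSucc :=
    fun i => (hα (Fin.castSucc_lt_succ (i := i))).le
  have hSet : {β : Fin (M + 1) → ℝ | ∀ i : Fin (M + 1), β i ≤ α i.castSucc ∧ α i.succ ≤ β i}
      = Set.univ.pi (fun i : Fin (M + 1) => Set.Icc (α i.succ) (α i.castSucc)) := by
    ext β
    simp only [Set.mem_setOf_eq, Set.mem_pi, Set.mem_univ, Set.mem_Icc, true_implies]
    exact ⟨fun h i => ⟨(h i).2, (h i).1⟩, fun h i => ⟨(h i).2, (h i).1⟩⟩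
  have hSm : MeasurableSet
      {β : Fin (M + 1) → ℝ | ∀ i : Fin (M + 1), β i ≤ α i.castSucc ∧ α i.succ ≤ β i} := by
    rw [hSet]; exact MeasurableSet.univ_pi fun i => measurableSet_Icc
  set f : Fin (M + 1) → Fin (M + 1) → ℝ → ℝ := fun i j =>
    (Set.Icc (α i.succ) (α i.castSucc)).indicator (fun t => t ^ (j : ℕ)) with hf
  have hfint : ∀ i j, Integrable (f i j) := fun i j =>
    (integrable_indicator_iff measurableSet_Icc).2 ((continuous_pow _).integrableOn_Icc)
  have hfval : ∀ (i j : Fin (M + 1)), (∫ t, f i j t)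
      = (α i.castSucc ^ ((j : ℕ) + 1) - α i.succ ^ ((j : ℕ) + 1)) / ((j : ℕ) + 1) := by
    intro i j
    rw [hf, integral_indicator measurableSet_Icc, integral_Icc_eq_integral_Ioc,
      ← intervalIntegral.integral_of_le (hle i), integral_pow]
  have hInd : ∀ x : Fin (M + 1) → ℝ,
      ({β : Fin (M + 1) → ℝ | ∀ i : Fin (M + 1), β i ≤ α i.castSucc ∧ α i.succ ≤ β i}).indicator
        (fun β => Matrix.det (Matrix.vandermonde β)) x
      = Matrix.det (Matrix.of fun i j => f i j (x i)) := by
    intro x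
    by_cases hx : ∀ i : Fin (M + 1), x i ≤ α i.castSucc ∧ α i.succ ≤ x i
    · rw [Set.indicator_of_mem (show x ∈ {β : Fin (M + 1) → ℝ |
          ∀ i : Fin (M + 1), β i ≤ α i.castSucc ∧ α i.succ ≤ β i} from hx)]
      congr 1
      ext i j
      have hmem : x i ∈ Set.Icc (α i.succ) (α i.castSucc) :=
        Set.mem_Icc.mpr ⟨(hx i).2, (hx i).1⟩
      simp [hf, Matrix.vandermonde, Set.indicator_of_mem hmem]
    · rw [Set.indicator_of_notMem (show x ∉ {β : Fin (M + 1) → ℝ |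
          ∀ i : Fin (M + 1), β i ≤ α i.castSucc ∧ α i.succ ≤ β i} from hx)]
      obtain ⟨i, hi⟩ := not_forall.mp hx
      symm
      apply Matrix.det_eq_zero_of_row_eq_zero i
      intro j
      have hmem : x i ∉ Set.Icc (α i.succ) (α i.castSucc) :=
        fun hmem => hi ⟨hmem.2, hmem.1⟩
      simp [hf, Set.indicator_of_notMem hmem]
  have hKrel : (-1 : ℝ) ^ (∑ i : Fin (M + 2), (Ioi i).card)
      = (-1 : ℝ) ^ (∑ i : Fin (M + 1), (Ioi i).card) * (-1 : ℝ) ^ (M + 1) := by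
    rw [← pow_add]
    congr 1
    rw [K_eq, K_eq, Finset.sum_range_succ]
  have step1 : ∀ β : Fin (M + 1) → ℝ,
      (∏ i : Fin (M + 1), ∏ j ∈ Ioi i, (β i - β j))
      = (-1 : ℝ) ^ (∑ i : Fin (M + 1), (Ioi i).card) * Matrix.det (Matrix.vandermonde β) := by
    intro β
    rw [Matrix.det_vandermonde]
    exact prod_sub_swap β
  calc ∫ β in {β : Fin (M + 1) → ℝ |
        ∀ i : Fin (M + 1), β i ≤ α i.castSucc ∧ α i.succ ≤ β i},
        ∏ i : Fin (M + 1), ∏ j ∈ Finset.Ioi i, (β i - β j)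
      = ∫ β in {β : Fin (M + 1) → ℝ |
          ∀ i : Fin (M + 1), β i ≤ α i.castSucc ∧ α i.succ ≤ β i},
          (-1 : ℝ) ^ (∑ i : Fin (M + 1), (Ioi i).card) * Matrix.det (Matrix.vandermonde β) := by
        simp only [step1]
    _ = (-1 : ℝ) ^ (∑ i : Fin (M + 1), (Ioi i).card) * ∫ β in {β : Fin (M + 1) → ℝ |
          ∀ i : Fin (M + 1), β i ≤ α i.castSucc ∧ α i.succ ≤ β i},
          Matrix.det (Matrix.vandermonde β) := integral_const_mul _ _
    _ = (-1 : ℝ) ^ (∑ i : Fin (M + 1), (Ioi i).card) *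
          ∫ x : Fin (M + 1) → ℝ, Matrix.det (Matrix.of fun i j => f i j (x i)) := by
        rw [← integral_indicator hSm]
        simp only [hInd]
    _ = (-1 : ℝ) ^ (∑ i : Fin (M + 1), (Ioi i).card) *
          Matrix.det (Matrix.of fun i j => ∫ t, f i j t) := by
        rw [integral_det_aux f hfint]
    _ = (-1 : ℝ) ^ (∑ i : Fin (M + 1), (Ioi i).card) *
          Matrix.det (Matrix.of fun (i j : Fin (M + 1)) =>
            ((α i.castSucc ^ ((j : ℕ) + 1) - α i.succ ^ ((j : ℕ) + 1)) / ((j : ℕ) + 1) : ℝ)) := by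
        have hBe : (Matrix.of fun i j => ∫ t, f i j t)
            = Matrix.of fun (i j : Fin (M + 1)) =>
              ((α i.castSucc ^ ((j : ℕ) + 1) - α i.succ ^ ((j : ℕ) + 1)) / ((j : ℕ) + 1) : ℝ) := by
          ext i j
          exact hfval i j
        rw [hBe]
    _ = (-1 : ℝ) ^ (∑ i : Fin (M + 1), (Ioi i).card) *
          ((-1 : ℝ) ^ (M + 1) * (∏ i : Fin (M + 2), ∏ j ∈ Ioi i, (α j - α i))
            * ((Nat.factorial (M + 1) : ℝ))⁻¹) := by
        rw [det_diff_eq]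
    _ = (∏ i : Fin (M + 2), ∏ j ∈ Finset.Ioi i, (α i - α j)) / (Nat.factorial (M + 1) : ℝ) := by
        rw [div_eq_mul_inv, prod_sub_swap α, hKrel]
        ring
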